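/- Let X be a random field on [0,∞)² with self-similar covariance of index (H₁,H₂), H₁, H₂ ∈ (0,1), and with second-moment stationary rectangular increments. Then for all s = (s₁,s₂), t = (t₁,t₂) ∈ [0,∞)²: E[X(t₁,t₂)·X(s₁,s₂)] + E[X(t₁,s₂)·X(s₁,t₂)] = (1/2)·(t₁^{2H₁} + s₁^{2H₁} − |t₁ − s₁|^{2H₁})·(t₂^{2H₂} + s₂^{2H₂} − |t₂ − s₂|^{2H₂})·E[X(1,1)²]. -/
import Mathlib

open MeasureTheory Real

/-- Auxiliary measurability lemma: if the squares of `A,B,C,D`, the "aligned" products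
`A*B`, `B*D`, `A*C`, `C*D`, and the square of the rectangular combination
`A - B - C + D` are a.e. strongly measurable, then so is the "diagonal" product `A*D`. -/
lemma aesm_diag {Ω : Type*} [MeasurableSpace Ω] (P : Measure Ω) (A B C D : Ω → ℝ)
    (hA2 : AEStronglyMeasurable (fun ω => (A ω)^2) P)
    (hB2 : AEStronglyMeasurable (fun ω => (B ω)^2) P)
    (hC2 : AEStronglyMeasurable (fun ω => (C ω)^2) P)
    (hD2 : AEStronglyMeasurable (fun ω => (D ω)^2) P)
    (hAB : AEStronglyMeasurable (fun ω => A ω * B ω) P)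
    (hBD : AEStronglyMeasurable (fun ω => B ω * D ω) P)
    (hAC : AEStronglyMeasurable (fun ω => A ω * C ω) P)
    (hCD : AEStronglyMeasurable (fun ω => C ω * D ω) P)
    (hS : AEStronglyMeasurable (fun ω => (A ω - B ω - C ω + D ω)^2) P) :
    AEStronglyMeasurable (fun ω => A ω * D ω) P := by
  classical
  obtain ⟨gA2, mA2, eA2⟩ := hA2
  obtain ⟨gB2, mB2, eB2⟩ := hB2
  obtain ⟨gC2, mC2, eC2⟩ := hC2
  obtain ⟨gD2, mD2, eD2⟩ := hD2
  obtain ⟨gAB, mAB, eAB⟩ := hAB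
  obtain ⟨gBD, mBD, eBD⟩ := hBD
  obtain ⟨gAC, mAC, eAC⟩ := hAC
  obtain ⟨gCD, mCD, eCD⟩ := hCD
  obtain ⟨gS, mS, eS⟩ := hS
  refine ⟨fun ω => if gB2 ω = 0 then
      (if gC2 ω = 0 then (gS ω - gA2 ω - gD2 ω)/2 else gAC ω * gCD ω / gC2 ω)
      else gAB ω * gBD ω / gB2 ω, ?_, ?_⟩
  · apply Measurable.stronglyMeasurable
    apply Measurable.ite (measurableSet_eq_fun mB2.measurable measurable_const)
    · apply Measurable.ite (measurableSet_eq_fun mC2.measurable measurable_const)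
      · exact ((mS.measurable.sub mA2.measurable).sub mD2.measurable).div measurable_const
      · exact (mAC.measurable.mul mCD.measurable).div mC2.measurable
    · exact (mAB.measurable.mul mBD.measurable).div mB2.measurable
  · filter_upwards [eA2, eB2, eC2, eD2, eAB, eBD, eAC, eCD, eS] with ω hA2' hB2' hC2'
      hD2' hAB' hBD' hAC' hCD' hS'
    by_cases hb : gB2 ω = 0
    · by_cases hc : gC2 ω = 0
      · rw [if_pos hb, if_pos hc]
        have hB0 : B ω = 0 := by
          have : (B ω)^2 = 0 := by rw [hB2', hb]
          exact pow_eq_zero_iff two_ne_zero |>.mp this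
        have hC0 : C ω = 0 := by
          have : (C ω)^2 = 0 := by rw [hC2', hc]
          exact pow_eq_zero_iff two_ne_zero |>.mp this
        rw [← hS', ← hA2', ← hD2', hB0, hC0]
        ring
      · rw [if_pos hb, if_neg hc]
        have hC0 : C ω ≠ 0 := by
          intro h
          apply hc
          rw [← hC2', h]
          norm_num
        rw [← hAC', ← hCD', ← hC2', eq_div_iff (pow_ne_zero 2 hC0)]
        ring
    · rw [if_neg hb]
      have hB0 : B ω ≠ 0 := by
        intro h
        apply hb
        rw [← hB2', h]
        norm_num
      rw [← hAB', ← hBD', ← hB2', eq_div_iff (pow_ne_zero 2 hB0)]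
      ring

/-- Lemma 3 of the paper, for fields with self-similar covariance and
second-moment stationary rectangular increments. -/
theorem lemma3_sum_of_covariances
    {Ω : Type*} [MeasurableSpace Ω] (P : Measure Ω) [IsProbabilityMeasure P]
    (H₁ H₂ : ℝ) (hH₁ : H₁ ∈ Set.Ioo (0:ℝ) 1) (hH₂ : H₂ ∈ Set.Ioo (0:ℝ) 1)
    (X : ℝ → ℝ → Ω → ℝ)
    (hL2 : ∀ t₁ t₂ : ℝ, 0 ≤ t₁ → 0 ≤ t₂ →
      Integrable (fun ω => (X t₁ t₂ ω) ^ 2) P)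
    (hss : ∀ a₁ a₂ : ℝ, 0 < a₁ → 0 < a₂ →
      ∀ t₁ t₂ s₁ s₂ : ℝ, 0 ≤ t₁ → 0 ≤ t₂ → 0 ≤ s₁ → 0 ≤ s₂ →
        ∫ ω, X (a₁ * t₁) (a₂ * t₂) ω * X (a₁ * s₁) (a₂ * s₂) ω ∂P
          = a₁ ^ (2 * H₁) * a₂ ^ (2 * H₂) * ∫ ω, X t₁ t₂ ω * X s₁ s₂ ω ∂P)
    (hsi : ∀ u₁ u₂ h₁ h₂ : ℝ, 0 ≤ u₁ → 0 ≤ u₂ → 0 ≤ h₁ → 0 ≤ h₂ →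
      ∫ ω, (X (u₁ + h₁) (u₂ + h₂) ω - X u₁ (u₂ + h₂) ω
            - X (u₁ + h₁) u₂ ω + X u₁ u₂ ω) ^ 2 ∂P
        = ∫ ω, (X h₁ h₂ ω - X 0 h₂ ω - X h₁ 0 ω + X 0 0 ω) ^ 2 ∂P) :
    ∀ t₁ t₂ s₁ s₂ : ℝ, 0 ≤ t₁ → 0 ≤ t₂ → 0 ≤ s₁ → 0 ≤ s₂ →
      (∫ ω, X t₁ t₂ ω * X s₁ s₂ ω ∂P) + (∫ ω, X t₁ s₂ ω * X s₁ t₂ ω ∂P)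
        = (1 / 2) * (t₁ ^ (2 * H₁) + s₁ ^ (2 * H₁) - |t₁ - s₁| ^ (2 * H₁))
          * (t₂ ^ (2 * H₂) + s₂ ^ (2 * H₂) - |t₂ - s₂| ^ (2 * H₂))
          * ∫ ω, (X 1 1 ω) ^ 2 ∂P := by
  intro t₁ t₂ s₁ s₂ ht₁ ht₂ hs₁ hs₂
  have h2H₁ : 0 < 2 * H₁ := by linarith [hH₁.1]
  have h2H₂ : 0 < 2 * H₂ := by linarith [hH₂.1]
  -- the field vanishes a.e. on the axes
  have axis1 : ∀ u : ℝ, 0 ≤ u → X 0 u =ᵐ[P] fun _ => (0:ℝ) := by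
    intro u hu
    have h := hss 2 1 (by norm_num) (by norm_num) 0 u 0 u le_rfl hu le_rfl hu
    simp only [mul_zero, one_mul] at h
    rw [Real.one_rpow, mul_one] at h
    have h1 : (1:ℝ) < 2 ^ (2*H₁) := by
      have h0 := (Real.rpow_lt_rpow_left_iff (x := 2) (y := (0:ℝ)) (z := 2*H₁)
        (by norm_num : (1:ℝ) < 2)).mpr h2H₁
      simpa [Real.rpow_zero] using h0
    have h2 : (2 ^ (2*H₁) - 1) * (∫ ω, X 0 u ω * X 0 u ω ∂P) = 0 := by
      linear_combination (-1 : ℝ) * h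
    have hc0 : ∫ ω, X 0 u ω * X 0 u ω ∂P = 0 := by
      rcases mul_eq_zero.mp h2 with h' | h'
      · exfalso; linarith
      · exact h'
    have hint0 : ∫ ω, (X 0 u ω)^2 ∂P = 0 := by
      have e : ∫ ω, (X 0 u ω)^2 ∂P = ∫ ω, X 0 u ω * X 0 u ω ∂P :=
        integral_congr_ae (Filter.Eventually.of_forall fun ω => by ring)
      rw [e]; exact hc0
    have hae := (integral_eq_zero_iff_of_nonneg (fun ω => sq_nonneg _)
      (hL2 0 u le_rfl hu)).mp hint0
    filter_upwards [hae] with ω hω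
    exact pow_eq_zero_iff two_ne_zero |>.mp hω
  have axis2 : ∀ u : ℝ, 0 ≤ u → X u 0 =ᵐ[P] fun _ => (0:ℝ) := by
    intro u hu
    have h := hss 1 2 (by norm_num) (by norm_num) u 0 u 0 hu le_rfl hu le_rfl
    simp only [mul_zero, one_mul] at h
    rw [Real.one_rpow, one_mul] at h
    have h1 : (1:ℝ) < 2 ^ (2*H₂) := by
      have h0 := (Real.rpow_lt_rpow_left_iff (x := 2) (y := (0:ℝ)) (z := 2*H₂)
        (by norm_num : (1:ℝ) < 2)).mpr h2H₂
      simpa [Real.rpow_zero] using h0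
    have h2 : (2 ^ (2*H₂) - 1) * (∫ ω, X u 0 ω * X u 0 ω ∂P) = 0 := by
      linear_combination (-1 : ℝ) * h
    have hc0 : ∫ ω, X u 0 ω * X u 0 ω ∂P = 0 := by
      rcases mul_eq_zero.mp h2 with h' | h'
      · exfalso; linarith
      · exact h'
    have hint0 : ∫ ω, (X u 0 ω)^2 ∂P = 0 := by
      have e : ∫ ω, (X u 0 ω)^2 ∂P = ∫ ω, X u 0 ω * X u 0 ω ∂P :=
        integral_congr_ae (Filter.Eventually.of_forall fun ω => by ring)
      rw [e]; exact hc0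
    have hae := (integral_eq_zero_iff_of_nonneg (fun ω => sq_nonneg _)
      (hL2 u 0 hu le_rfl)).mp hint0
    filter_upwards [hae] with ω hω
    exact pow_eq_zero_iff two_ne_zero |>.mp hω
  -- value of the second moments
  have sq_eq : ∀ a b : ℝ, 0 ≤ a → 0 ≤ b →
      ∫ ω, (X a b ω)^2 ∂P = a ^ (2*H₁) * b ^ (2*H₂) * ∫ ω, (X 1 1 ω)^2 ∂P := by
    intro a b ha hb
    rcases ha.lt_or_eq with ha' | ha'
    · rcases hb.lt_or_eq with hb' | hb'
      · have h := hss a b ha' hb' 1 1 1 1 zero_le_one zero_le_one zero_le_one zero_le_one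
        rw [mul_one, mul_one] at h
        have eL : ∫ ω, X a b ω * X a b ω ∂P = ∫ ω, (X a b ω)^2 ∂P :=
          integral_congr_ae (Filter.Eventually.of_forall fun ω => by ring)
        have eR : ∫ ω, X 1 1 ω * X 1 1 ω ∂P = ∫ ω, (X 1 1 ω)^2 ∂P :=
          integral_congr_ae (Filter.Eventually.of_forall fun ω => by ring)
        rw [eL, eR] at h
        exact h
      · have e : (fun ω => (X a b ω)^2) =ᵐ[P] fun _ => (0:ℝ) := by
          filter_upwards [axis2 a ha] with ω h0
          rw [show X a b ω = X a 0 ω by rw [← hb'], show X a 0 ω = 0 from h0]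
          norm_num
        rw [integral_congr_ae e, integral_zero, ← hb',
          Real.zero_rpow h2H₂.ne', mul_zero, zero_mul]
    · have e : (fun ω => (X a b ω)^2) =ᵐ[P] fun _ => (0:ℝ) := by
        filter_upwards [axis1 b hb] with ω h0
        rw [show X a b ω = X 0 b ω by rw [← ha'], show X 0 b ω = 0 from h0]
        norm_num
      rw [integral_congr_ae e, integral_zero, ← ha',
        Real.zero_rpow h2H₁.ne', zero_mul, zero_mul]
  -- helpers: a product with an a.e. vanishing factor integrates to zero
  have z0L : ∀ a b c d : ℝ, (X a b =ᵐ[P] fun _ => (0:ℝ)) →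
      ∫ ω, X a b ω * X c d ω ∂P = 0 := by
    intro a b c d h
    have e : (fun ω => X a b ω * X c d ω) =ᵐ[P] fun _ => (0:ℝ) := by
      filter_upwards [h] with ω hω
      rw [show X a b ω = 0 from hω, zero_mul]
    rw [integral_congr_ae e, integral_zero]
  have z0R : ∀ a b c d : ℝ, (X c d =ᵐ[P] fun _ => (0:ℝ)) →
      ∫ ω, X a b ω * X c d ω ∂P = 0 := by
    intro a b c d h
    have e : (fun ω => X a b ω * X c d ω) =ᵐ[P] fun _ => (0:ℝ) := by
      filter_upwards [h] with ω hω
      rw [show X c d ω = 0 from hω, mul_zero]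
    rw [integral_congr_ae e, integral_zero]
  by_cases hγ : ∫ ω, (X 1 1 ω)^2 ∂P = 0
  · -- degenerate case: the field vanishes a.e. everywhere
    have hz : ∀ a b : ℝ, 0 ≤ a → 0 ≤ b → X a b =ᵐ[P] fun _ => (0:ℝ) := by
      intro a b ha hb
      have h0 : ∫ ω, (X a b ω)^2 ∂P = 0 := by
        rw [sq_eq a b ha hb, hγ, mul_zero]
      have hae := (integral_eq_zero_iff_of_nonneg (fun ω => sq_nonneg _)
        (hL2 a b ha hb)).mp h0
      filter_upwards [hae] with ω hω
      exact pow_eq_zero_iff two_ne_zero |>.mp hω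
    rw [z0L t₁ t₂ s₁ s₂ (hz t₁ t₂ ht₁ ht₂), z0L t₁ s₂ s₁ t₂ (hz t₁ s₂ ht₁ hs₂), hγ,
      mul_zero]
    norm_num
  · set gam := ∫ ω, (X 1 1 ω)^2 ∂P with hgam
    -- value of the square of a rectangular increment
    have incV2 : ∀ a₁ a₂ b₁ b₂ : ℝ, 0 ≤ a₁ → 0 ≤ a₂ → a₁ < b₁ → a₂ < b₂ →
        ∫ ω, (X b₁ b₂ ω - X a₁ b₂ ω - X b₁ a₂ ω + X a₁ a₂ ω)^2 ∂P
          = (b₁ - a₁) ^ (2*H₁) * (b₂ - a₂) ^ (2*H₂) * gam := by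
      intro a₁ a₂ b₁ b₂ ha₁ ha₂ hb₁ hb₂
      have h := hsi a₁ a₂ (b₁ - a₁) (b₂ - a₂) ha₁ ha₂ (by linarith) (by linarith)
      rw [show a₁ + (b₁ - a₁) = b₁ by ring, show a₂ + (b₂ - a₂) = b₂ by ring] at h
      rw [h]
      have e : (fun ω => (X (b₁ - a₁) (b₂ - a₂) ω - X 0 (b₂ - a₂) ω
          - X (b₁ - a₁) 0 ω + X 0 0 ω)^2) =ᵐ[P] (fun ω => (X (b₁ - a₁) (b₂ - a₂) ω)^2) := by
        filter_upwards [axis1 (b₂ - a₂) (by linarith), axis2 (b₁ - a₁) (by linarith),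
          axis1 0 le_rfl] with ω e1 e2 e3
        rw [show X 0 (b₂ - a₂) ω = 0 from e1, show X (b₁ - a₁) 0 ω = 0 from e2,
          show X 0 0 ω = 0 from e3]
        ring
      rw [integral_congr_ae e, sq_eq _ _ (by linarith) (by linarith)]
    -- integrability of the square of a rectangular increment
    have incI2 : ∀ a₁ a₂ b₁ b₂ : ℝ, 0 ≤ a₁ → 0 ≤ a₂ → a₁ < b₁ → a₂ < b₂ →
        Integrable (fun ω => (X b₁ b₂ ω - X a₁ b₂ ω - X b₁ a₂ ω + X a₁ a₂ ω)^2) P := by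
      intro a₁ a₂ b₁ b₂ ha₁ ha₂ hb₁ hb₂
      by_contra hni
      have h := incV2 a₁ a₂ b₁ b₂ ha₁ ha₂ hb₁ hb₂
      rw [integral_undef hni] at h
      have hne : (b₁ - a₁)^(2*H₁) * (b₂ - a₂)^(2*H₂) * gam ≠ 0 :=
        mul_ne_zero (mul_ne_zero (Real.rpow_pos_of_pos (by linarith) _).ne'
          (Real.rpow_pos_of_pos (by linarith) _).ne') hγ
      exact hne h.symm
    -- horizontal difference squares
    have diffH : ∀ a b y : ℝ, 0 ≤ a → a < b → 0 < y →
        Integrable (fun ω => (X b y ω - X a y ω)^2) P ∧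
        ∫ ω, (X b y ω - X a y ω)^2 ∂P = (b - a) ^ (2*H₁) * y ^ (2*H₂) * gam := by
      intro a b y ha hab hy
      have e : (fun ω => (X b y ω - X a y ω - X b 0 ω + X a 0 ω)^2)
          =ᵐ[P] (fun ω => (X b y ω - X a y ω)^2) := by
        filter_upwards [axis2 b (ha.trans hab.le), axis2 a ha] with ω e1 e2
        rw [show X b 0 ω = 0 from e1, show X a 0 ω = 0 from e2]
        ring
      constructor
      · exact (incI2 a 0 b y ha le_rfl hab hy).congr e
      · rw [← integral_congr_ae e, incV2 a 0 b y ha le_rfl hab hy, sub_zero]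
    -- vertical difference squares
    have diffV : ∀ x c d : ℝ, 0 < x → 0 ≤ c → c < d →
        Integrable (fun ω => (X x d ω - X x c ω)^2) P ∧
        ∫ ω, (X x d ω - X x c ω)^2 ∂P = x ^ (2*H₁) * (d - c) ^ (2*H₂) * gam := by
      intro x c d hx hc hcd
      have e : (fun ω => (X x d ω - X 0 d ω - X x c ω + X 0 c ω)^2)
          =ᵐ[P] (fun ω => (X x d ω - X x c ω)^2) := by
        filter_upwards [axis1 d (hc.trans hcd.le), axis1 c hc] with ω e1 e2
        rw [show X 0 d ω = 0 from e1, show X 0 c ω = 0 from e2]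
        ring
      constructor
      · exact (incI2 0 c x d le_rfl hc hx hcd).congr e
      · rw [← integral_congr_ae e, incV2 0 c x d le_rfl hc hx hcd, sub_zero]
    -- horizontal (same second coordinate) covariances
    have covrow_lt : ∀ a b y : ℝ, 0 ≤ a → a < b → 0 < y →
        Integrable (fun ω => X a y ω * X b y ω) P ∧
        ∫ ω, X a y ω * X b y ω ∂P
          = (1/2) * (a^(2*H₁) + b^(2*H₁) - (b - a)^(2*H₁)) * y^(2*H₂) * gam := by
      intro a b y ha hab hy
      obtain ⟨iD, vD⟩ := diffH a b y ha hab hy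
      have hb : 0 ≤ b := ha.trans hab.le
      have iA := hL2 a y ha hy.le
      have iB := hL2 b y hb hy.le
      have e : (fun ω => X a y ω * X b y ω)
          = (fun ω => ((X a y ω)^2 + (X b y ω)^2 - (X b y ω - X a y ω)^2)/2) := by
        funext ω; ring
      have iS : Integrable (fun ω => (X a y ω)^2 + (X b y ω)^2) P := iA.add iB
      constructor
      · rw [e]; exact (iS.sub iD).div_const 2
      · rw [e, integral_div, integral_sub iS iD, integral_add iA iB,
          sq_eq a y ha hy.le, sq_eq b y hb hy.le, vD]
        ring
    have covrowI : ∀ a b y : ℝ, 0 ≤ a → 0 ≤ b → 0 < y →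
        Integrable (fun ω => X a y ω * X b y ω) P := by
      intro a b y ha hb hy
      rcases lt_trichotomy a b with h | h | h
      · exact (covrow_lt a b y ha h hy).1
      · subst h
        exact (hL2 a y ha hy.le).congr (Filter.Eventually.of_forall fun ω => by ring)
      · exact ((covrow_lt b a y hb h hy).1).congr
          (Filter.Eventually.of_forall fun ω => mul_comm _ _)
    have covrowV : ∀ a b y : ℝ, 0 ≤ a → 0 ≤ b → 0 < y →
        ∫ ω, X a y ω * X b y ω ∂P
          = (1/2) * (a^(2*H₁) + b^(2*H₁) - |a - b|^(2*H₁)) * y^(2*H₂) * gam := by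
      intro a b y ha hb hy
      rcases lt_trichotomy a b with h | h | h
      · rw [abs_of_neg (by linarith : a - b < 0), neg_sub]
        exact (covrow_lt a b y ha h hy).2
      · subst h
        rw [sub_self, abs_zero, Real.zero_rpow h2H₁.ne']
        have eL : ∫ ω, X a y ω * X a y ω ∂P = ∫ ω, (X a y ω)^2 ∂P :=
          integral_congr_ae (Filter.Eventually.of_forall fun ω => by ring)
        rw [eL, sq_eq a y ha hy.le]
        ring
      · have c : ∫ ω, X a y ω * X b y ω ∂P = ∫ ω, X b y ω * X a y ω ∂P :=
          integral_congr_ae (Filter.Eventually.of_forall fun ω => mul_comm _ _)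
        rw [c, (covrow_lt b a y hb h hy).2, abs_of_pos (by linarith : (0:ℝ) < a - b)]
        ring
    -- vertical (same first coordinate) covariances
    have covcol_lt : ∀ x c d : ℝ, 0 < x → 0 ≤ c → c < d →
        Integrable (fun ω => X x c ω * X x d ω) P ∧
        ∫ ω, X x c ω * X x d ω ∂P
          = (1/2) * x^(2*H₁) * (c^(2*H₂) + d^(2*H₂) - (d - c)^(2*H₂)) * gam := by
      intro x c d hx hc hcd
      obtain ⟨iD, vD⟩ := diffV x c d hx hc hcd
      have hd : 0 ≤ d := hc.trans hcd.le
      have iA := hL2 x c hx.le hc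
      have iB := hL2 x d hx.le hd
      have e : (fun ω => X x c ω * X x d ω)
          = (fun ω => ((X x c ω)^2 + (X x d ω)^2 - (X x d ω - X x c ω)^2)/2) := by
        funext ω; ring
      have iS : Integrable (fun ω => (X x c ω)^2 + (X x d ω)^2) P := iA.add iB
      constructor
      · rw [e]; exact (iS.sub iD).div_const 2
      · rw [e, integral_div, integral_sub iS iD, integral_add iA iB,
          sq_eq x c hx.le hc, sq_eq x d hx.le hd, vD]
        ring
    have covcolI : ∀ x c d : ℝ, 0 < x → 0 ≤ c → 0 ≤ d →
        Integrable (fun ω => X x c ω * X x d ω) P := by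
      intro x c d hx hc hd
      rcases lt_trichotomy c d with h | h | h
      · exact (covcol_lt x c d hx hc h).1
      · subst h
        exact (hL2 x c hx.le hc).congr (Filter.Eventually.of_forall fun ω => by ring)
      · exact ((covcol_lt x d c hx hd h).1).congr
          (Filter.Eventually.of_forall fun ω => mul_comm _ _)
    have covcolV : ∀ x c d : ℝ, 0 < x → 0 ≤ c → 0 ≤ d →
        ∫ ω, X x c ω * X x d ω ∂P
          = (1/2) * x^(2*H₁) * (c^(2*H₂) + d^(2*H₂) - |c - d|^(2*H₂)) * gam := by
      intro x c d hx hc hd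
      rcases lt_trichotomy c d with h | h | h
      · rw [abs_of_neg (by linarith : c - d < 0), neg_sub]
        exact (covcol_lt x c d hx hc h).2
      · subst h
        rw [sub_self, abs_zero, Real.zero_rpow h2H₂.ne']
        have eL : ∫ ω, X x c ω * X x c ω ∂P = ∫ ω, (X x c ω)^2 ∂P :=
          integral_congr_ae (Filter.Eventually.of_forall fun ω => by ring)
        rw [eL, sq_eq x c hx.le hc]
        ring
      · have cc : ∫ ω, X x c ω * X x d ω ∂P = ∫ ω, X x d ω * X x c ω ∂P :=
          integral_congr_ae (Filter.Eventually.of_forall fun ω => mul_comm _ _)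
        rw [cc, (covcol_lt x d c hx hd h).2, abs_of_pos (by linarith : (0:ℝ) < c - d)]
        ring
    -- the main identity for a nondegenerate rectangle
    have main : ∀ p₁ p₂ q₁ q₂ : ℝ, 0 < p₁ → 0 < p₂ → p₁ < q₁ → p₂ < q₂ →
        (∫ ω, X q₁ q₂ ω * X p₁ p₂ ω ∂P) + (∫ ω, X p₁ q₂ ω * X q₁ p₂ ω ∂P)
          = (1/2) * (q₁^(2*H₁) + p₁^(2*H₁) - (q₁ - p₁)^(2*H₁))
            * (q₂^(2*H₂) + p₂^(2*H₂) - (q₂ - p₂)^(2*H₂)) * gam := by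
      intro p₁ p₂ q₁ q₂ hp₁ hp₂ h1 h2
      have hq₁ : 0 < q₁ := hp₁.trans h1
      have hq₂ : 0 < q₂ := hp₂.trans h2
      have iA2 := hL2 q₁ q₂ hq₁.le hq₂.le
      have iB2 := hL2 p₁ q₂ hp₁.le hq₂.le
      have iC2 := hL2 q₁ p₂ hq₁.le hp₂.le
      have iD2 := hL2 p₁ p₂ hp₁.le hp₂.le
      have iS2 := incI2 p₁ p₂ q₁ q₂ hp₁.le hp₂.le h1 h2
      have vS := incV2 p₁ p₂ q₁ q₂ hp₁.le hp₂.le h1 h2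
      have iAB := covrowI q₁ p₁ q₂ hq₁.le hp₁.le hq₂
      have vAB := covrowV q₁ p₁ q₂ hq₁.le hp₁.le hq₂
      rw [abs_of_pos (by linarith : (0:ℝ) < q₁ - p₁)] at vAB
      have iCD := covrowI q₁ p₁ p₂ hq₁.le hp₁.le hp₂
      have vCD := covrowV q₁ p₁ p₂ hq₁.le hp₁.le hp₂
      rw [abs_of_pos (by linarith : (0:ℝ) < q₁ - p₁)] at vCD
      have iAC := covcolI q₁ q₂ p₂ hq₁ hq₂.le hp₂.le
      have vAC := covcolV q₁ q₂ p₂ hq₁ hq₂.le hp₂.le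
      rw [abs_of_pos (by linarith : (0:ℝ) < q₂ - p₂)] at vAC
      have iBD := covcolI p₁ q₂ p₂ hp₁ hq₂.le hp₂.le
      have vBD := covcolV p₁ q₂ p₂ hp₁ hq₂.le hp₂.le
      rw [abs_of_pos (by linarith : (0:ℝ) < q₂ - p₂)] at vBD
      -- a.e. strong measurability of the two diagonal products
      have hADm : AEStronglyMeasurable (fun ω => X q₁ q₂ ω * X p₁ p₂ ω) P :=
        aesm_diag P (X q₁ q₂) (X p₁ q₂) (X q₁ p₂) (X p₁ p₂)
          iA2.aestronglyMeasurable iB2.aestronglyMeasurable iC2.aestronglyMeasurable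
          iD2.aestronglyMeasurable iAB.aestronglyMeasurable iBD.aestronglyMeasurable
          iAC.aestronglyMeasurable iCD.aestronglyMeasurable iS2.aestronglyMeasurable
      have iAD : Integrable (fun ω => X q₁ q₂ ω * X p₁ p₂ ω) P := by
        refine Integrable.mono' (iA2.add iD2) hADm (Filter.Eventually.of_forall fun ω => ?_)
        rw [Real.norm_eq_abs, abs_mul, Pi.add_apply]
        nlinarith [sq_nonneg (|X q₁ q₂ ω| - |X p₁ p₂ ω|), sq_abs (X q₁ q₂ ω),
          sq_abs (X p₁ p₂ ω), abs_nonneg (X q₁ q₂ ω), abs_nonneg (X p₁ p₂ ω)]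
      have hSflip : AEStronglyMeasurable
          (fun ω => (X p₁ q₂ ω - X q₁ q₂ ω - X p₁ p₂ ω + X q₁ p₂ ω)^2) P :=
        iS2.aestronglyMeasurable.congr (Filter.Eventually.of_forall fun ω => by ring)
      have hABflip : AEStronglyMeasurable (fun ω => X p₁ q₂ ω * X q₁ q₂ ω) P :=
        iAB.aestronglyMeasurable.congr (Filter.Eventually.of_forall fun ω => mul_comm _ _)
      have hCDflip : AEStronglyMeasurable (fun ω => X p₁ p₂ ω * X q₁ p₂ ω) P :=
        iCD.aestronglyMeasurable.congr (Filter.Eventually.of_forall fun ω => mul_comm _ _)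
      have hBCm : AEStronglyMeasurable (fun ω => X p₁ q₂ ω * X q₁ p₂ ω) P :=
        aesm_diag P (X p₁ q₂) (X q₁ q₂) (X p₁ p₂) (X q₁ p₂)
          iB2.aestronglyMeasurable iA2.aestronglyMeasurable iD2.aestronglyMeasurable
          iC2.aestronglyMeasurable hABflip iAC.aestronglyMeasurable
          iBD.aestronglyMeasurable hCDflip hSflip
      have iBC : Integrable (fun ω => X p₁ q₂ ω * X q₁ p₂ ω) P := by
        refine Integrable.mono' (iB2.add iC2) hBCm (Filter.Eventually.of_forall fun ω => ?_)
        rw [Real.norm_eq_abs, abs_mul, Pi.add_apply]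
        nlinarith [sq_nonneg (|X p₁ q₂ ω| - |X q₁ p₂ ω|), sq_abs (X p₁ q₂ ω),
          sq_abs (X q₁ p₂ ω), abs_nonneg (X p₁ q₂ ω), abs_nonneg (X q₁ p₂ ω)]
      -- expansion of the square of the rectangular increment
      have Ee : ∫ ω, (X q₁ q₂ ω - X p₁ q₂ ω - X q₁ p₂ ω + X p₁ p₂ ω)^2 ∂P
          = ∫ ω, ((X q₁ q₂ ω)^2 + (X p₁ q₂ ω)^2 + (X q₁ p₂ ω)^2 + (X p₁ p₂ ω)^2
              - 2*(X q₁ q₂ ω * X p₁ q₂ ω) - 2*(X q₁ q₂ ω * X q₁ p₂ ω)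
              - 2*(X p₁ q₂ ω * X p₁ p₂ ω) - 2*(X q₁ p₂ ω * X p₁ p₂ ω)
              + 2*(X q₁ q₂ ω * X p₁ p₂ ω + X p₁ q₂ ω * X q₁ p₂ ω)) ∂P :=
        integral_congr_ae (Filter.Eventually.of_forall fun ω => by ring)
      have I1 : Integrable (fun ω => (X q₁ q₂ ω)^2 + (X p₁ q₂ ω)^2) P := iA2.add iB2
      have I2 : Integrable (fun ω => (X q₁ q₂ ω)^2 + (X p₁ q₂ ω)^2 + (X q₁ p₂ ω)^2) P :=
        I1.add iC2
      have I3 : Integrable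
          (fun ω => (X q₁ q₂ ω)^2 + (X p₁ q₂ ω)^2 + (X q₁ p₂ ω)^2 + (X p₁ p₂ ω)^2) P :=
        I2.add iD2
      have jAB : Integrable (fun ω => 2*(X q₁ q₂ ω * X p₁ q₂ ω)) P := iAB.const_mul 2
      have jAC : Integrable (fun ω => 2*(X q₁ q₂ ω * X q₁ p₂ ω)) P := iAC.const_mul 2
      have jBD : Integrable (fun ω => 2*(X p₁ q₂ ω * X p₁ p₂ ω)) P := iBD.const_mul 2
      have jCD : Integrable (fun ω => 2*(X q₁ p₂ ω * X p₁ p₂ ω)) P := iCD.const_mul 2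
      have I4 : Integrable
          (fun ω => (X q₁ q₂ ω)^2 + (X p₁ q₂ ω)^2 + (X q₁ p₂ ω)^2 + (X p₁ p₂ ω)^2
            - 2*(X q₁ q₂ ω * X p₁ q₂ ω)) P := I3.sub jAB
      have I5 : Integrable
          (fun ω => (X q₁ q₂ ω)^2 + (X p₁ q₂ ω)^2 + (X q₁ p₂ ω)^2 + (X p₁ p₂ ω)^2
            - 2*(X q₁ q₂ ω * X p₁ q₂ ω) - 2*(X q₁ q₂ ω * X q₁ p₂ ω)) P := I4.sub jAC
      have I6 : Integrable
          (fun ω => (X q₁ q₂ ω)^2 + (X p₁ q₂ ω)^2 + (X q₁ p₂ ω)^2 + (X p₁ p₂ ω)^2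
            - 2*(X q₁ q₂ ω * X p₁ q₂ ω) - 2*(X q₁ q₂ ω * X q₁ p₂ ω)
            - 2*(X p₁ q₂ ω * X p₁ p₂ ω)) P := I5.sub jBD
      have I7 : Integrable
          (fun ω => (X q₁ q₂ ω)^2 + (X p₁ q₂ ω)^2 + (X q₁ p₂ ω)^2 + (X p₁ p₂ ω)^2
            - 2*(X q₁ q₂ ω * X p₁ q₂ ω) - 2*(X q₁ q₂ ω * X q₁ p₂ ω)
            - 2*(X p₁ q₂ ω * X p₁ p₂ ω) - 2*(X q₁ p₂ ω * X p₁ p₂ ω)) P := I6.sub jCD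
      have I8 : Integrable
          (fun ω => 2*(X q₁ q₂ ω * X p₁ p₂ ω + X p₁ q₂ ω * X q₁ p₂ ω)) P :=
        (iAD.add iBC).const_mul 2
      have h := Ee
      rw [integral_add I7 I8, integral_sub I6 jCD, integral_sub I5 jBD,
        integral_sub I4 jAC, integral_sub I3 jAB, integral_add I2 iD2,
        integral_add I1 iC2, integral_add iA2 iB2,
        integral_const_mul, integral_const_mul, integral_const_mul, integral_const_mul,
        integral_const_mul, integral_add iAD iBC] at h
      rw [vS] at h
      rw [sq_eq q₁ q₂ hq₁.le hq₂.le, sq_eq p₁ q₂ hp₁.le hq₂.le,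
        sq_eq q₁ p₂ hq₁.le hp₂.le, sq_eq p₁ p₂ hp₁.le hp₂.le,
        vAB, vAC, vBD, vCD] at h
      linear_combination (-1/2 : ℝ) * h
    -- final assembly: case analysis on the coordinates
    rcases ht₁.lt_or_eq with ht₁p | ht₁0
    · rcases ht₂.lt_or_eq with ht₂p | ht₂0
      · rcases hs₁.lt_or_eq with hs₁p | hs₁0
        · rcases hs₂.lt_or_eq with hs₂p | hs₂0
          · -- all coordinates positive
            rcases lt_trichotomy t₁ s₁ with h1 | h1 | h1
            · rcases lt_trichotomy t₂ s₂ with h2 | h2 | h2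
              · -- t₁ < s₁, t₂ < s₂
                have hm := main t₁ t₂ s₁ s₂ ht₁p ht₂p h1 h2
                have c1 : ∫ ω, X t₁ t₂ ω * X s₁ s₂ ω ∂P = ∫ ω, X s₁ s₂ ω * X t₁ t₂ ω ∂P :=
                  integral_congr_ae (Filter.Eventually.of_forall fun ω => mul_comm _ _)
                rw [c1, abs_sub_comm t₁ s₁, abs_of_pos (by linarith : (0:ℝ) < s₁ - t₁),
                  abs_sub_comm t₂ s₂, abs_of_pos (by linarith : (0:ℝ) < s₂ - t₂)]
                linear_combination hm
              · -- t₂ = s₂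
                subst h2
                have v1 := covrowV t₁ s₁ t₂ ht₁p.le hs₁p.le ht₂p
                rw [v1, sub_self, abs_zero, Real.zero_rpow h2H₂.ne']
                ring
              · -- t₁ < s₁, s₂ < t₂
                have hm := main t₁ s₂ s₁ t₂ ht₁p hs₂p h1 h2
                have c2 : ∫ ω, X t₁ s₂ ω * X s₁ t₂ ω ∂P = ∫ ω, X s₁ t₂ ω * X t₁ s₂ ω ∂P :=
                  integral_congr_ae (Filter.Eventually.of_forall fun ω => mul_comm _ _)
                rw [c2, abs_sub_comm t₁ s₁, abs_of_pos (by linarith : (0:ℝ) < s₁ - t₁),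
                  abs_of_pos (by linarith : (0:ℝ) < t₂ - s₂)]
                linear_combination hm
            · -- t₁ = s₁
              subst h1
              have v1 := covcolV t₁ t₂ s₂ ht₁p ht₂p.le hs₂p.le
              have v2 := covcolV t₁ s₂ t₂ ht₁p hs₂p.le ht₂p.le
              rw [abs_sub_comm s₂ t₂] at v2
              rw [v1, v2, sub_self, abs_zero, Real.zero_rpow h2H₁.ne']
              ring
            · rcases lt_trichotomy t₂ s₂ with h2 | h2 | h2
              · -- s₁ < t₁, t₂ < s₂
                have hm := main s₁ t₂ t₁ s₂ hs₁p ht₂p h1 h2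
                have c1 : ∫ ω, X t₁ t₂ ω * X s₁ s₂ ω ∂P = ∫ ω, X s₁ s₂ ω * X t₁ t₂ ω ∂P :=
                  integral_congr_ae (Filter.Eventually.of_forall fun ω => mul_comm _ _)
                rw [c1, abs_of_pos (by linarith : (0:ℝ) < t₁ - s₁),
                  abs_sub_comm t₂ s₂, abs_of_pos (by linarith : (0:ℝ) < s₂ - t₂)]
                linear_combination hm
              · -- t₂ = s₂
                subst h2
                have v1 := covrowV t₁ s₁ t₂ ht₁p.le hs₁p.le ht₂p
                rw [v1, sub_self, abs_zero, Real.zero_rpow h2H₂.ne']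
                ring
              · -- s₁ < t₁, s₂ < t₂
                have hm := main s₁ s₂ t₁ t₂ hs₁p hs₂p h1 h2
                have c2 : ∫ ω, X t₁ s₂ ω * X s₁ t₂ ω ∂P = ∫ ω, X s₁ t₂ ω * X t₁ s₂ ω ∂P :=
                  integral_congr_ae (Filter.Eventually.of_forall fun ω => mul_comm _ _)
                rw [c2, abs_of_pos (by linarith : (0:ℝ) < t₁ - s₁),
                  abs_of_pos (by linarith : (0:ℝ) < t₂ - s₂)]
                linear_combination hm
          · -- s₂ = 0
            subst hs₂0
            rw [z0R t₁ t₂ s₁ 0 (axis2 s₁ hs₁), z0L t₁ 0 s₁ t₂ (axis2 t₁ ht₁),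
              Real.zero_rpow h2H₂.ne', sub_zero, abs_of_nonneg ht₂]
            ring
        · -- s₁ = 0
          subst hs₁0
          rw [z0R t₁ t₂ 0 s₂ (axis1 s₂ hs₂), z0R t₁ s₂ 0 t₂ (axis1 t₂ ht₂),
            Real.zero_rpow h2H₁.ne', sub_zero, abs_of_nonneg ht₁]
          ring
      · -- t₂ = 0
        subst ht₂0
        rw [z0L t₁ 0 s₁ s₂ (axis2 t₁ ht₁), z0R t₁ s₂ s₁ 0 (axis2 s₁ hs₁),
          Real.zero_rpow h2H₂.ne', zero_sub, abs_neg, abs_of_nonneg hs₂]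
        ring
    · -- t₁ = 0
      subst ht₁0
      rw [z0L 0 t₂ s₁ s₂ (axis1 t₂ ht₂), z0L 0 s₂ s₁ t₂ (axis1 s₂ hs₂),
        Real.zero_rpow h2H₁.ne', zero_sub, abs_neg, abs_of_nonneg hs₁]
      ring
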